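/- Let d ≥ 1, N ∈ ℕ, ρ ∈ ℝ^d with 0 < ρ_i < 1 and ρ_1+⋯+ρ_d < 1, and let α ∈ ℕ^{d+1} with 1 ≤ |α| ≤ N. Then the explicitly defined monic Krawtchouk polynomial L_α(·; ρ, N) is orthogonal to all polynomials of lower degree with respect to the Krawtchouk weight: for every β ∈ ℕ^{d+1} with |β| < |α|, Σ_{x ∈ Z_N^{d+1}} L_α(x; ρ, N) · m_β(x) · 𝛒^x / x! = 0. Moreover L_α is monic, i.e., in its defining expansion Σ_{γ ≤ α} c_γ m_γ the coefficient of m_α equals 1. -/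

import Mathlib

open Finset

/-- Pochhammer symbol `(a)_k = a (a+1) ⋯ (a+k-1)`. -/
noncomputable def poch (a : ℝ) : ℕ → ℝ
  | 0 => 1
  | k + 1 => poch a k * (a + k)

/-- Multi-index Pochhammer `(x)_γ = ∏ i (x i)_{γ i}`. -/
noncomputable def pochV {m : ℕ} (x : Fin m → ℝ) (γ : Fin m → ℕ) : ℝ :=
  ∏ i, poch (x i) (γ i)

/-- Multi-index factorial `γ! = ∏ i (γ i)!` (as a real number). -/
noncomputable def mfact {m : ℕ} (γ : Fin m → ℕ) : ℝ :=
  ∏ i, (Nat.factorial (γ i) : ℝ)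

/-- Shifted monomial `m_γ(x) = (-1)^{|γ|} (-x)_γ`. -/
noncomputable def mono {m : ℕ} (γ : Fin m → ℕ) (x : Fin m → ℝ) : ℝ :=
  (-1 : ℝ) ^ (∑ i, γ i) * pochV (fun i => -(x i)) γ

/-- `Z_N^{d+1} = {α ∈ ℕ^{d+1} : |α| = N}` as a finite set. -/
def ZN (d N : ℕ) : Finset (Fin (d + 1) → ℕ) :=
  (Fintype.piFinset fun _ => Finset.range (N + 1)).filter fun α => ∑ i, α i = N

/-- `{ν ∈ ℕ^d : |ν| = n}` as a finite set. -/
def idxSet (d n : ℕ) : Finset (Fin d → ℕ) :=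
  (Fintype.piFinset fun _ => Finset.range (n + 1)).filter fun ν => ∑ i, ν i = n

/-- The finite set `{γ ∈ ℕ^m : γ ≤ α}`. -/
def below {m : ℕ} (α : Fin m → ℕ) : Finset (Fin m → ℕ) :=
  Fintype.piFinset fun i => Finset.range (α i + 1)

/-- Monic Hahn polynomial `Q_α(x; κ, N)`. -/
noncomputable def monicQ (d N : ℕ) (κ : Fin (d + 1) → ℝ) (α : Fin (d + 1) → ℕ)
    (x : Fin (d + 1) → ℝ) : ℝ :=
  poch (-(N : ℝ)) (∑ i, α i) * pochV (fun i => κ i + 1) α /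
      poch ((∑ i, κ i) + d + (∑ i, α i)) (∑ i, α i) *
    ∑ γ ∈ below α,
      pochV (fun i => -(α i : ℝ)) γ * poch ((∑ i, κ i) + d + (∑ i, α i)) (∑ i, γ i) *
          (-1 : ℝ) ^ (∑ i, γ i) /
          (mfact γ * pochV (fun i => κ i + 1) γ * poch (-(N : ℝ)) (∑ i, γ i)) *
        mono γ x

/-- One-variable Hahn polynomial `Q_n(x; a, b, M)` (a `₃F₂` sum). -/
noncomputable def hahn1 (n : ℕ) (x a b M : ℝ) : ℝ :=
  ∑ k ∈ Finset.range (n + 1),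
    poch (-(n : ℝ)) k * poch ((n : ℝ) + a + b + 1) k * poch (-x) k /
      (poch (a + 1) k * poch (-M) k * (Nat.factorial k : ℝ))

/-- The parameter `a_j = κ_{j+1}+⋯+κ_{d+1} + 2|ν^{j+1}| + d - j` (1-based `j`). -/
noncomputable def aj (d : ℕ) (κ : Fin (d + 1) → ℝ) (ν : Fin d → ℕ) (j : Fin d) : ℝ :=
  (∑ i ∈ Finset.univ.filter (fun i : Fin (d + 1) => (j : ℕ) < (i : ℕ)), κ i) +
    2 * (∑ i ∈ Finset.univ.filter (fun i : Fin d => (j : ℕ) < (i : ℕ)), (ν i : ℝ)) +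
    ((d - 1 - (j : ℕ) : ℕ) : ℝ)

/-- `|x_{j-1}| = x_1 + ⋯ + x_{j-1}` (1-based `j`). -/
noncomputable def sumLt (d : ℕ) (x : Fin (d + 1) → ℕ) (j : Fin d) : ℝ :=
  ∑ i ∈ Finset.univ.filter (fun i : Fin (d + 1) => (i : ℕ) < (j : ℕ)), (x i : ℝ)

/-- `|ν^{j+1}| = ν_{j+1} + ⋯ + ν_d` (1-based `j`). -/
noncomputable def sumGt (d : ℕ) (ν : Fin d → ℕ) (j : Fin d) : ℝ :=
  ∑ i ∈ Finset.univ.filter (fun i : Fin d => (j : ℕ) < (i : ℕ)), (ν i : ℝ)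

/-- Hahn polynomial of `d` variables `H_ν(x; κ, N)`. -/
noncomputable def hahnH (d N : ℕ) (κ : Fin (d + 1) → ℝ) (ν : Fin d → ℕ)
    (x : Fin (d + 1) → ℕ) : ℝ :=
  (-1 : ℝ) ^ (∑ i, ν i) / poch (-(N : ℝ)) (∑ i, ν i) *
    ∏ j : Fin d,
      poch (κ j.castSucc + 1) (ν j) / poch (aj d κ ν j + 1) (ν j) *
        poch (-(N : ℝ) + sumLt d x j + sumGt d ν j) (ν j) *
        hahn1 (ν j) (x j.castSucc : ℝ) (κ j.castSucc) (aj d κ ν j)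
          ((N : ℝ) - sumLt d x j - sumGt d ν j)

/-- Squared norm `B_ν(κ, N)` of the Hahn polynomial `H_ν(·; κ, N)`. -/
noncomputable def Bnorm (d N : ℕ) (κ : Fin (d + 1) → ℝ) (ν : Fin d → ℕ) : ℝ :=
  (-1 : ℝ) ^ (∑ i, ν i) * poch ((∑ i, κ i) + d + 1) (N + ∑ i, ν i) /
      (poch (-(N : ℝ)) (∑ i, ν i) * poch ((∑ i, κ i) + d + 1) N *
        poch ((∑ i, κ i) + d + 1) (2 * ∑ i, ν i)) *
    ∏ j : Fin d,
      poch (κ j.castSucc + aj d κ ν j + 1) (2 * ν j) * poch (κ j.castSucc + 1) (ν j) *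
          (Nat.factorial (ν j) : ℝ) /
        (poch (κ j.castSucc + aj d κ ν j + 1) (ν j) * poch (aj d κ ν j + 1) (ν j))

/-- Projection `Q_{α,n}(x; κ, N)` of `m_α/(κ+1)_α` onto the space of degree `n`. -/
noncomputable def monicQn (d N : ℕ) (κ : Fin (d + 1) → ℝ) (α : Fin (d + 1) → ℕ) (n : ℕ)
    (x : Fin (d + 1) → ℝ) : ℝ :=
  (-1 : ℝ) ^ (∑ i, α i) * poch (-(N : ℝ)) (∑ i, α i) * poch ((∑ i, κ i) + d + 1) (2 * n) /
      (poch (-(N : ℝ)) n * poch ((∑ i, κ i) + d + 1) ((∑ i, α i) + n)) *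
    ∑ β ∈ ZN d n,
      pochV (fun i => -(α i : ℝ)) β / (mfact β * pochV (fun i => κ i + 1) β) *
        monicQ d N κ β x

/-- The kernel `E_k(x, y; κ) = Σ_{|γ|=k} (-x)_γ (-y)_γ / (γ! (κ+1)_γ)`. -/
noncomputable def Efun (d : ℕ) (κ : Fin (d + 1) → ℝ) (x y : Fin (d + 1) → ℕ) (k : ℕ) : ℝ :=
  ∑ γ ∈ ZN d k,
    pochV (fun i => -(x i : ℝ)) γ * pochV (fun i => -(y i : ℝ)) γ /
      (mfact γ * pochV (fun i => κ i + 1) γ)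

/-- Monic Jacobi polynomial on the simplex `R_α^κ(x)`. -/
noncomputable def jacobiR (d : ℕ) (κ : Fin (d + 1) → ℝ) (α : Fin (d + 1) → ℕ)
    (x : Fin d → ℝ) : ℝ :=
  (-1 : ℝ) ^ (∑ i, α i) * pochV (fun i => κ i + 1) α /
      poch ((∑ i, κ i) + d + (∑ i, α i)) (∑ i, α i) *
    ∑ γ ∈ below α,
      pochV (fun i => -(α i : ℝ)) γ * poch ((∑ i, κ i) + d + (∑ i, α i)) (∑ i, γ i) /
          (pochV (fun i => κ i + 1) γ * mfact γ) *
        ∏ i, (Fin.snoc x (1 - ∑ i, x i) : Fin (d + 1) → ℝ) i ^ γ i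

/-- One-variable Krawtchouk polynomial `K_n(x; p, M)`. -/
noncomputable def kraw1 (n : ℕ) (x p M : ℝ) : ℝ :=
  ∑ k ∈ Finset.range (n + 1),
    poch (-(n : ℝ)) k * poch (-x) k / (poch (-M) k * (Nat.factorial k : ℝ) * p ^ k)

/-- The extended parameter `𝛒 = (ρ_1, …, ρ_d, 1 - |ρ|)`. -/
noncomputable def brho (d : ℕ) (ρ : Fin d → ℝ) : Fin (d + 1) → ℝ :=
  Fin.snoc ρ (1 - ∑ i, ρ i)

/-- `𝛒^γ = ∏ i 𝛒_i^{γ i}`. -/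
noncomputable def bpow (d : ℕ) (ρ : Fin d → ℝ) (γ : Fin (d + 1) → ℕ) : ℝ :=
  ∏ i, brho d ρ i ^ γ i

/-- `|𝛒_j| = ρ_1 + ⋯ + ρ_j` (1-based `j`). -/
noncomputable def sumLe (d : ℕ) (ρ : Fin d → ℝ) (j : Fin d) : ℝ :=
  ∑ i ∈ Finset.univ.filter (fun i : Fin d => (i : ℕ) ≤ (j : ℕ)), ρ i

/-- `|𝛒_{j-1}| = ρ_1 + ⋯ + ρ_{j-1}` (1-based `j`). -/
noncomputable def sumLtρ (d : ℕ) (ρ : Fin d → ℝ) (j : Fin d) : ℝ :=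
  ∑ i ∈ Finset.univ.filter (fun i : Fin d => (i : ℕ) < (j : ℕ)), ρ i

/-- Krawtchouk polynomial of `d` variables `K_ν(x; ρ, N)`. -/
noncomputable def krawH (d N : ℕ) (ρ : Fin d → ℝ) (ν : Fin d → ℕ)
    (x : Fin (d + 1) → ℕ) : ℝ :=
  (-1 : ℝ) ^ (∑ i, ν i) / poch (-(N : ℝ)) (∑ i, ν i) *
    ∏ j : Fin d,
      ρ j ^ ν j / (1 - sumLe d ρ j) ^ ν j *
        poch (-(N : ℝ) + sumLt d x j + sumGt d ν j) (ν j) *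
        kraw1 (ν j) (x j.castSucc : ℝ) (ρ j / (1 - sumLtρ d ρ j))
          ((N : ℝ) - sumLt d x j - sumGt d ν j)

/-- Squared norm `C_ν(ρ, N)` of the Krawtchouk polynomial `K_ν(·; ρ, N)`. -/
noncomputable def Cnorm (d N : ℕ) (ρ : Fin d → ℝ) (ν : Fin d → ℕ) : ℝ :=
  (-1 : ℝ) ^ (∑ i, ν i) / (poch (-(N : ℝ)) (∑ i, ν i) * (Nat.factorial N : ℝ)) *
    ∏ j : Fin d,
      (Nat.factorial (ν j) : ℝ) * ρ j ^ ν j /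
        (1 - sumLe d ρ j) ^ ((ν j : ℤ) - ((Fin.snoc ν 0 : Fin (d + 1) → ℕ) j.succ : ℤ))

/-- Monic Krawtchouk polynomial `L_α(x; ρ, N)`. -/
noncomputable def monicL (d N : ℕ) (ρ : Fin d → ℝ) (α : Fin (d + 1) → ℕ)
    (x : Fin (d + 1) → ℝ) : ℝ :=
  poch (-(N : ℝ)) (∑ i, α i) * bpow d ρ α *
    ∑ γ ∈ below α,
      pochV (fun i => -(α i : ℝ)) γ * (-1 : ℝ) ^ (∑ i, γ i) /
          (mfact γ * poch (-(N : ℝ)) (∑ i, γ i) * bpow d ρ γ) *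
        mono γ x

/-- Projection `L_{α,n}(x; ρ, N)` of `m_α/𝛒^α` onto the space of degree `n`. -/
noncomputable def monicLn (d N : ℕ) (ρ : Fin d → ℝ) (α : Fin (d + 1) → ℕ) (n : ℕ)
    (x : Fin (d + 1) → ℝ) : ℝ :=
  (-1 : ℝ) ^ (∑ i, α i) * poch (-(N : ℝ)) (∑ i, α i) / poch (-(N : ℝ)) n *
    ∑ β ∈ ZN d n,
      pochV (fun i => -(α i : ℝ)) β / (mfact β * bpow d ρ β) * monicL d N ρ β x

/-- The kernel `F_k(x, y; ρ) = Σ_{|γ|=k} (-x)_γ (-y)_γ / (γ! 𝛒^γ)`. -/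
noncomputable def Ffun (d : ℕ) (ρ : Fin d → ℝ) (x y : Fin (d + 1) → ℕ) (k : ℕ) : ℝ :=
  ∑ γ ∈ ZN d k,
    pochV (fun i => -(x i : ℝ)) γ * pochV (fun i => -(y i : ℝ)) γ / (mfact γ * bpow d ρ γ)

/-! ### Auxiliary lemmas -/

section Aux

lemma poch_eq_prod (a : ℝ) (k : ℕ) : poch a k = ∏ j ∈ range k, (a + j) := by
  induction k with
  | zero => simp [poch]
  | succ k ih => rw [poch, ih, prod_range_succ]

lemma cast_descFactorial (n k : ℕ) :
    (n.descFactorial k : ℝ) = ∏ j ∈ range k, ((n : ℝ) - j) := by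
  induction k with
  | zero => simp
  | succ k ih =>
    rw [Nat.descFactorial_succ, prod_range_succ, ← ih]
    rcases le_or_gt k n with h | h
    · push_cast [h]; ring
    · rw [Nat.descFactorial_eq_zero_iff_lt.2 h]
      simp [Nat.sub_eq_zero_of_le h.le]

lemma poch_neg_nat (n k : ℕ) :
    poch (-(n : ℝ)) k = (-1 : ℝ) ^ k * (n.descFactorial k : ℝ) := by
  rw [poch_eq_prod, cast_descFactorial]
  have : ∀ j ∈ range k, -(n : ℝ) + j = (-1) * ((n : ℝ) - j) := fun j _ => by ring
  rw [prod_congr rfl this, prod_mul_distrib, prod_const, card_range]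

lemma mono_nat {m : ℕ} (γ x : Fin m → ℕ) :
    mono γ (fun i => (x i : ℝ)) = ∏ i, ((x i).descFactorial (γ i) : ℝ) := by
  unfold mono pochV
  simp only [poch_neg_nat]
  rw [prod_mul_distrib, prod_pow_eq_pow_sum, ← mul_assoc, ← pow_add]
  rw [Even.neg_one_pow ⟨∑ i, γ i, by ring⟩, one_mul]

lemma pochV_neg_nat {m : ℕ} (x γ : Fin m → ℕ) :
    pochV (fun i => -((x i : ℕ) : ℝ)) γ
      = (-1 : ℝ) ^ (∑ i, γ i) * ∏ i, ((x i).descFactorial (γ i) : ℝ) := by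
  unfold pochV
  simp only [poch_neg_nat]
  rw [prod_mul_distrib, prod_pow_eq_pow_sum]

lemma mfact_pos {m : ℕ} (γ : Fin m → ℕ) : 0 < mfact γ :=
  prod_pos fun i _ => by exact_mod_cast Nat.factorial_pos _

lemma mfact_ne_zero {m : ℕ} (γ : Fin m → ℕ) : mfact γ ≠ 0 := (mfact_pos γ).ne'

end Aux

section Aux2
variable {d : ℕ} {ρ : Fin d → ℝ}

lemma brho_pos (hρ : ∀ i, 0 < ρ i ∧ ρ i < 1) (hρs : ∑ i, ρ i < 1) (i : Fin (d + 1)) :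
    0 < brho d ρ i := by
  unfold brho
  induction i using Fin.lastCases with
  | last => simpa [Fin.snoc_last] using hρs
  | cast j => simpa [Fin.snoc_castSucc] using (hρ j).1

lemma brho_sum : ∑ i : Fin (d + 1), brho d ρ i = 1 := by
  unfold brho
  rw [Fin.sum_univ_castSucc]
  simp [Fin.snoc_castSucc, Fin.snoc_last]

lemma bpow_pos (hρ : ∀ i, 0 < ρ i ∧ ρ i < 1) (hρs : ∑ i, ρ i < 1) (γ : Fin (d + 1) → ℕ) :
    0 < bpow d ρ γ :=
  prod_pos fun i _ => pow_pos (brho_pos hρ hρs i) _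

lemma bpow_add (x y : Fin (d + 1) → ℕ) :
    bpow d ρ (x + y) = bpow d ρ x * bpow d ρ y := by
  unfold bpow
  rw [← prod_mul_distrib]
  exact prod_congr rfl fun i _ => by rw [Pi.add_apply, pow_add]

def SF (m M : ℕ) : Finset (Fin m → ℕ) :=
  (Fintype.piFinset fun _ => Finset.range (M + 1)).filter fun z => ∑ i, z i = M

lemma mem_SF {m M : ℕ} {z : Fin m → ℕ} : z ∈ SF m M ↔ ∑ i, z i = M := by
  constructor
  · exact fun h => (mem_filter.1 h).2
  · intro h
    refine mem_filter.2 ⟨Fintype.mem_piFinset.2 fun i => ?_, h⟩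
    rw [mem_range, Nat.lt_succ_iff, ← h]
    exact single_le_sum (fun _ _ => Nat.zero_le _) (mem_univ i)

lemma mem_below {m : ℕ} {α γ : Fin m → ℕ} : γ ∈ below α ↔ ∀ i, γ i ≤ α i := by
  simp [below, Fintype.mem_piFinset, Nat.lt_succ_iff]

lemma sum_SF_shift {m : ℕ} (M : ℕ) (τ : Fin m → ℕ) (hτ : ∑ i, τ i ≤ M)
    (f : (Fin m → ℕ) → ℝ)
    (h0 : ∀ y, ∑ i, y i = M → ¬(∀ i, τ i ≤ y i) → f y = 0) :
    ∑ y ∈ SF m M, f y = ∑ z ∈ SF m (M - ∑ i, τ i), f (z + τ) := by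
  rw [← sum_filter_of_ne (p := fun y => ∀ i, τ i ≤ y i)
    (fun y hy hfy => by_contra fun hc => hfy (h0 y (mem_SF.1 hy) hc))]
  refine sum_nbij' (fun y => y - τ) (fun z => z + τ) ?_ ?_ ?_ ?_ ?_
  · intro y hy
    obtain ⟨hy1, hy2⟩ := mem_filter.1 hy
    refine mem_SF.2 ?_
    have h1 : ∀ i, (y - τ) i = y i - τ i := fun i => rfl
    rw [Finset.sum_congr rfl fun i _ => h1 i,
      Finset.sum_tsub_distrib univ (fun i _ => hy2 i), mem_SF.1 hy1]
  · intro z hz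
    refine mem_filter.2 ⟨mem_SF.2 ?_, fun i => by simp⟩
    have h1 : ∑ i, (z + τ) i = (∑ i, z i) + ∑ i, τ i := by
      rw [← Finset.sum_add_distrib]; rfl
    rw [h1, mem_SF.1 hz, Nat.sub_add_cancel hτ]
  · intro y hy
    funext i
    exact Nat.sub_add_cancel ((mem_filter.1 hy).2 i)
  · intro z _
    funext i
    show z i + τ i - τ i = z i
    omega
  · intro y hy
    have h1 : y - τ + τ = y := funext fun i => Nat.sub_add_cancel ((mem_filter.1 hy).2 i)
    rw [h1]

lemma sum_below_shift {m : ℕ} (α κ : Fin m → ℕ) (hκ : ∀ i, κ i ≤ α i)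
    (f : (Fin m → ℕ) → ℝ)
    (h0 : ∀ γ ∈ below α, ¬(∀ i, κ i ≤ γ i) → f γ = 0) :
    ∑ γ ∈ below α, f γ = ∑ δ ∈ below (α - κ), f (δ + κ) := by
  rw [← sum_filter_of_ne (p := fun γ => ∀ i, κ i ≤ γ i)
    (fun γ hγ hfγ => by_contra fun hc => hfγ (h0 γ hγ hc))]
  refine sum_nbij' (fun γ => γ - κ) (fun δ => δ + κ) ?_ ?_ ?_ ?_ ?_
  · intro γ hγ
    obtain ⟨hγ1, hγ2⟩ := mem_filter.1 hγ
    refine mem_below.2 fun i => ?_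
    have h2 := mem_below.1 hγ1 i
    show γ i - κ i ≤ α i - κ i
    omega
  · intro δ hδ
    refine mem_filter.2 ⟨mem_below.2 fun i => ?_, fun i => by simp⟩
    have h2 : δ i ≤ α i - κ i := mem_below.1 hδ i
    show δ i + κ i ≤ α i
    have := hκ i
    omega
  · intro γ hγ
    funext i
    exact Nat.sub_add_cancel ((mem_filter.1 hγ).2 i)
  · intro δ _
    funext i
    show δ i + κ i - κ i = δ i
    omega
  · intro γ hγ
    have h1 : γ - κ + κ = γ := funext fun i => Nat.sub_add_cancel ((mem_filter.1 hγ).2 i)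
    rw [h1]

end Aux2

section Aux3
variable {d : ℕ} {ρ : Fin d → ℝ}

lemma SF_eq_piAntidiag (m M : ℕ) : SF m M = Finset.piAntidiag univ M := by
  ext z
  rw [mem_SF, Finset.mem_piAntidiag]
  simp

lemma sum_SF_weight (m M : ℕ) (v : Fin m → ℝ) :
    ∑ z ∈ SF m M, (∏ i, v i ^ z i) / mfact z = (∑ i, v i) ^ M / (M.factorial : ℝ) := by
  rw [Finset.sum_pow_eq_sum_piAntidiag univ v M, ← SF_eq_piAntidiag, sum_div]
  refine sum_congr rfl fun z hz => ?_
  have hfac : (Nat.multinomial univ z : ℝ) * mfact z = (M.factorial : ℝ) := by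
    rw [mfact, mul_comm, ← Nat.cast_prod, ← Nat.cast_mul, Nat.multinomial_spec, mem_SF.1 hz]
  have hmul : (Nat.multinomial univ z : ℝ) ≠ 0 := by
    exact_mod_cast (Nat.multinomial_pos _ _).ne'
  have hmf := mfact_ne_zero z
  rw [← hfac]
  field_simp

lemma dF_mul_fact (a b : ℕ) : ((a + b).descFactorial b : ℝ) * (a.factorial : ℝ) =
    ((a + b).factorial : ℝ) := by
  rw [← Nat.cast_mul]
  congr 1
  rw [Nat.descFactorial_eq_factorial_mul_choose]
  have := Nat.choose_mul_factorial_mul_factorial (Nat.le_add_left b a)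
  rw [Nat.add_sub_cancel] at this
  calc Nat.factorial b * (a+b).choose b * Nat.factorial a
      = (a+b).choose b * Nat.factorial b * Nat.factorial a := by ring
    _ = _ := this

/-- Key sum: `∑_{|y|=M} (∏ dF(y,τ)) 𝛒^y / y! = 𝛒^τ · [Στ ≤ M] / (M-Στ)!`. -/
lemma sum_SF_dF (hρ : ∀ i, 0 < ρ i ∧ ρ i < 1) (hρs : ∑ i, ρ i < 1)
    (M : ℕ) (τ : Fin (d + 1) → ℕ) :
    ∑ y ∈ SF (d + 1) M, (∏ i, ((y i).descFactorial (τ i) : ℝ)) * bpow d ρ y / mfact y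
      = bpow d ρ τ *
        (if ∑ i, τ i ≤ M then (((M - ∑ i, τ i).factorial : ℝ))⁻¹ else 0) := by
  have hvanish : ∀ y : Fin (d+1) → ℕ, ¬(∀ i, τ i ≤ y i) →
      (∏ i, ((y i).descFactorial (τ i) : ℝ)) * bpow d ρ y / mfact y = 0 := by
    intro y hy
    push_neg at hy
    obtain ⟨i, hi⟩ := hy
    rw [prod_eq_zero (mem_univ i)]
    · simp
    · rw [Nat.descFactorial_eq_zero_iff_lt.2 hi, Nat.cast_zero]
  by_cases hτ : ∑ i, τ i ≤ M
  · rw [if_pos hτ]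
    rw [sum_SF_shift M τ hτ _ (fun y _ h => hvanish y h)]
    have hterm : ∀ z : Fin (d+1) → ℕ,
        (∏ i, (((z + τ) i).descFactorial (τ i) : ℝ)) * bpow d ρ (z + τ) / mfact (z + τ)
        = bpow d ρ τ * ((∏ i, brho d ρ i ^ z i) / mfact z) := by
      intro z
      have h1 : mfact (z + τ) = (∏ i, (((z + τ) i).descFactorial (τ i) : ℝ)) * mfact z := by
        rw [mfact, mfact, ← prod_mul_distrib]
        exact prod_congr rfl fun i _ => (dF_mul_fact (z i) (τ i)).symm
      have h2 : (∏ i, (((z + τ) i).descFactorial (τ i) : ℝ)) ≠ 0 := by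
        refine prod_ne_zero_iff.2 fun i _ => ?_
        intro hc
        have hc' : ((z + τ) i).descFactorial (τ i) = 0 := by exact_mod_cast hc
        have := Nat.descFactorial_eq_zero_iff_lt.1 hc'
        have : τ i ≤ (z + τ) i := by simp
        omega
      calc (∏ i, (((z + τ) i).descFactorial (τ i) : ℝ)) * bpow d ρ (z + τ) / mfact (z + τ)
          = (∏ i, (((z + τ) i).descFactorial (τ i) : ℝ)) * (bpow d ρ z * bpow d ρ τ) /
            ((∏ i, (((z + τ) i).descFactorial (τ i) : ℝ)) * mfact z) := by rw [h1, bpow_add]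
        _ = bpow d ρ z * bpow d ρ τ / mfact z := mul_div_mul_left _ _ h2
        _ = bpow d ρ τ * ((∏ i, brho d ρ i ^ z i) / mfact z) := by rw [bpow]; ring
    rw [Finset.sum_congr rfl fun z _ => hterm z, ← mul_sum,
      sum_SF_weight (d+1) (M - ∑ i, τ i) (brho d ρ), brho_sum, one_pow]
    rw [one_div]
  · rw [if_neg hτ, mul_zero]
    refine sum_eq_zero fun y hy => ?_
    refine hvanish y fun hc => hτ ?_
    calc ∑ i, τ i ≤ ∑ i, y i := sum_le_sum fun i _ => hc i
      _ = M := mem_SF.1 hy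
end Aux3

section Aux4

lemma descFactorial_add (a b n : ℕ) :
    (a + b).descFactorial n
      = ∑ k ∈ range (n + 1), n.choose k * (a.descFactorial k * b.descFactorial (n - k)) := by
  rw [Nat.descFactorial_eq_factorial_mul_choose, Nat.add_choose_eq,
    Finset.Nat.sum_antidiagonal_eq_sum_range_succ_mk, mul_sum]
  refine sum_congr rfl fun k hk => ?_
  rw [mem_range, Nat.lt_succ_iff] at hk
  rw [Nat.descFactorial_eq_factorial_mul_choose, Nat.descFactorial_eq_factorial_mul_choose]
  have h : n.choose k * Nat.factorial k * Nat.factorial (n - k) = Nat.factorial n :=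
    Nat.choose_mul_factorial_mul_factorial hk
  rw [← h]
  ring

lemma sum_piFinset_cons {m : ℕ} {M : Type*} [AddCommMonoid M] (S : Fin (m + 1) → Finset ℕ)
    (f : (Fin (m + 1) → ℕ) → M) :
    ∑ δ ∈ Fintype.piFinset S, f δ
      = ∑ a ∈ S 0, ∑ t ∈ Fintype.piFinset (Fin.tail S), f (Fin.cons a t) := by
  have h := Finset.filter_piFinset_eq_map_consEquiv S (fun _ => True)
  simp only [filter_true] at h
  rw [h, sum_map, sum_product]
  rfl

end Aux4

section Aux5

lemma choose_vandermonde_multi : ∀ (m : ℕ) (μ : Fin m → ℕ) (k : ℕ),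
    (∑ δ ∈ below μ, if ∑ i, δ i = k then ∏ i, (μ i).choose (δ i) else 0)
      = (∑ i, μ i).choose k := by
  intro m
  induction m with
  | zero =>
    intro μ k
    rw [show below μ = {(fun i => 0 : Fin 0 → ℕ)} from Finset.eq_singleton_iff_unique_mem.2
      ⟨mem_below.2 fun i => i.elim0, fun x _ => funext fun i => i.elim0⟩]
    cases k with
    | zero => simp
    | succ k => simp
  | succ m ih =>
    intro μ k
    have hbelow : below μ = Fintype.piFinset fun i => range (μ i + 1) := rfl
    rw [hbelow, sum_piFinset_cons]
    have hinner : ∀ a ∈ range (μ 0 + 1),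
        (∑ t ∈ Fintype.piFinset (Fin.tail fun i => range (μ i + 1)),
          if ∑ i, (Fin.cons a t : Fin (m+1) → ℕ) i = k
          then ∏ i, (μ i).choose ((Fin.cons a t : Fin (m+1) → ℕ) i) else 0)
        = (μ 0).choose a *
          (if a ≤ k then (∑ i, Fin.tail μ i).choose (k - a) else 0) := by
      intro a _
      have hpi : Fintype.piFinset (Fin.tail fun i => range (μ i + 1)) = below (Fin.tail μ) := rfl
      have hterm : ∀ t : Fin m → ℕ,
          (if ∑ i, (Fin.cons a t : Fin (m+1) → ℕ) i = k
            then ∏ i, (μ i).choose ((Fin.cons a t : Fin (m+1) → ℕ) i) else 0)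
          = (μ 0).choose a *
            (if a ≤ k ∧ ∑ i, t i = k - a then ∏ i, (Fin.tail μ i).choose (t i) else 0) := by
        intro t
        have hs : ∑ i, (Fin.cons a t : Fin (m+1) → ℕ) i = a + ∑ i, t i := by
          rw [Fin.sum_univ_succ]
          simp [Fin.tail]
        have hp : ∏ i, (μ i).choose ((Fin.cons a t : Fin (m+1) → ℕ) i)
            = (μ 0).choose a * ∏ i, (Fin.tail μ i).choose (t i) := by
          rw [Fin.prod_univ_succ]
          simp [Fin.tail]
        rw [hs, hp]
        by_cases hak : a ≤ k ∧ ∑ i, t i = k - a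
        · rw [if_pos (by omega), if_pos hak]
        · rw [if_neg (by omega), if_neg hak, mul_zero]
      rw [hpi, Finset.sum_congr rfl fun t _ => hterm t, ← mul_sum]
      congr 1
      by_cases hak : a ≤ k
      · have : ∀ t : Fin m → ℕ,
            (if a ≤ k ∧ ∑ i, t i = k - a then ∏ i, (Fin.tail μ i).choose (t i) else 0)
            = (if ∑ i, t i = k - a then ∏ i, (Fin.tail μ i).choose (t i) else 0) := by
          intro t; by_cases h : ∑ i, t i = k - a
          · rw [if_pos ⟨hak, h⟩, if_pos h]
          · rw [if_neg (fun hc => h hc.2), if_neg h]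
        rw [Finset.sum_congr rfl fun t _ => this t, ih (Fin.tail μ) (k - a), if_pos hak]
      · rw [if_neg hak]
        exact sum_eq_zero fun t _ => if_neg (fun hc => hak hc.1)
    rw [Finset.sum_congr rfl hinner]
    -- now the single-variable Vandermonde
    have hV : (μ 0 + ∑ i, Fin.tail μ i).choose k
        = ∑ a ∈ range (k + 1), (μ 0).choose a * (∑ i, Fin.tail μ i).choose (k - a) := by
      rw [Nat.add_choose_eq, Finset.Nat.sum_antidiagonal_eq_sum_range_succ_mk]
    have hsum : ∑ i, μ i = μ 0 + ∑ i, Fin.tail μ i := by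
      rw [Fin.sum_univ_succ]; rfl
    rw [hsum, hV]
    set M' := ∑ i, Fin.tail μ i
    have h1 : ∑ a ∈ range (μ 0 + 1), (μ 0).choose a * (if a ≤ k then M'.choose (k - a) else 0)
        = ∑ a ∈ range (μ 0 + k + 1),
            (μ 0).choose a * (if a ≤ k then M'.choose (k - a) else 0) := by
      refine sum_subset (range_subset_range.2 (by omega)) fun a _ ha => ?_
      rw [mem_range, Nat.lt_succ_iff, not_le] at ha
      rw [Nat.choose_eq_zero_of_lt ha, zero_mul]
    have h2 : ∑ a ∈ range (μ 0 + k + 1),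
            (μ 0).choose a * (if a ≤ k then M'.choose (k - a) else 0)
        = ∑ a ∈ range (k + 1), (μ 0).choose a * M'.choose (k - a) := by
      rw [← sum_subset (range_subset_range.2 (show k + 1 ≤ μ 0 + k + 1 by omega))
        (fun a _ ha => by
          rw [mem_range, Nat.lt_succ_iff, not_le] at ha
          rw [if_neg (by omega), mul_zero])]
      refine sum_congr rfl fun a ha => ?_
      rw [mem_range, Nat.lt_succ_iff] at ha
      rw [if_pos ha]
    rw [h1, h2]

end Aux5

section Aux6
open Polynomial

lemma alt_sum_choose (n : ℕ) (hn : n ≠ 0) :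
    ∑ k ∈ range (n + 1), (-1 : ℝ) ^ k * (n.choose k : ℝ) = 0 := by
  have h := Int.alternating_sum_range_choose_of_ne hn
  have : ((∑ i ∈ range (n + 1), (-1 : ℤ) ^ i * (n.choose i : ℤ) : ℤ) : ℝ) = 0 := by
    rw [h]; exact Int.cast_zero
  push_cast at this
  exact this

lemma alt_sum_choose_dF (n j : ℕ) (hj : j < n) :
    ∑ k ∈ range (n + 1), (-1 : ℝ) ^ k * (n.choose k : ℝ) * (k.descFactorial j : ℝ) = 0 := by
  have hstep : ∑ k ∈ range (n + 1), (-1 : ℝ) ^ k * (n.choose k : ℝ) * (k.descFactorial j : ℝ)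
      = ∑ k ∈ Finset.Ico j (n + 1), (-1 : ℝ) ^ k * (n.choose k : ℝ) * (k.descFactorial j : ℝ) := by
    refine (sum_subset (by rw [range_eq_Ico]; exact Finset.Ico_subset_Ico (by omega) le_rfl)
      fun k hk hk2 => ?_).symm
    have : k < j := by
      rw [mem_range] at hk
      rw [Finset.mem_Ico] at hk2
      omega
    rw [Nat.descFactorial_eq_zero_iff_lt.2 this, Nat.cast_zero, mul_zero]
  rw [hstep, Finset.sum_Ico_eq_sum_range]
  have hterm : ∀ t, t < n + 1 - j →
      (-1 : ℝ) ^ (j + t) * (n.choose (j + t) : ℝ) * ((j + t).descFactorial j : ℝ)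
      = ((-1 : ℝ) ^ j * (n.choose j : ℝ) * (Nat.factorial j : ℝ)) *
        ((-1 : ℝ) ^ t * ((n - j).choose t : ℝ)) := by
    intro t ht
    have h1 : (j + t).descFactorial j = Nat.factorial j * (j + t).choose j :=
      Nat.descFactorial_eq_factorial_mul_choose _ _
    have h2 : n.choose (j + t) * (j + t).choose j = n.choose j * (n - j).choose t := by
      have := Nat.choose_mul (n := n) (show j ≤ j + t by omega)
      rw [this, Nat.add_sub_cancel_left]
    rw [h1, pow_add]
    push_cast
    calc (-1:ℝ)^j * (-1:ℝ)^t * (n.choose (j+t) : ℝ) * ((Nat.factorial j : ℝ) * ((j+t).choose j : ℝ))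
        = ((-1:ℝ)^j * (-1:ℝ)^t * (Nat.factorial j : ℝ)) *
            ((n.choose (j+t) : ℝ) * ((j+t).choose j : ℝ)) := by ring
      _ = ((-1:ℝ)^j * (-1:ℝ)^t * (Nat.factorial j : ℝ)) *
            ((n.choose j : ℝ) * ((n-j).choose t : ℝ)) := by
          congr 1
          exact_mod_cast congrArg (Nat.cast : ℕ → ℝ) h2
      _ = _ := by ring
  rw [Finset.sum_congr rfl fun t ht => hterm t (by rwa [mem_range] at ht), ← mul_sum]
  have : n + 1 - j = (n - j) + 1 := by omega
  rw [this, alt_sum_choose (n - j) (by omega), mul_zero]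

lemma alt_sum_poly (n : ℕ) : ∀ (r : ℕ) (q : Polynomial ℝ), q.natDegree ≤ r → r < n →
    ∑ k ∈ range (n + 1), (-1 : ℝ) ^ k * (n.choose k : ℝ) * q.eval (k : ℝ) = 0 := by
  intro r
  induction r with
  | zero =>
    intro q hq hn
    rw [Polynomial.eq_C_of_natDegree_le_zero hq]
    simp only [Polynomial.eval_C]
    have : ∑ k ∈ range (n + 1), (-1 : ℝ) ^ k * (n.choose k : ℝ) * q.coeff 0
        = (∑ k ∈ range (n + 1), (-1 : ℝ) ^ k * (n.choose k : ℝ)) * q.coeff 0 := by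
      rw [sum_mul]
    rw [this, alt_sum_choose n (by omega), zero_mul]
  | succ r ih =>
    intro q hq hn
    set c := q.coeff (r + 1) with hc
    set q' := q - Polynomial.C c * descPochhammer ℝ (r + 1) with hq'
    have hdeg : q'.natDegree ≤ r := by
      refine Polynomial.natDegree_le_iff_coeff_eq_zero.2 fun N hN => ?_
      rw [hq', Polynomial.coeff_sub, Polynomial.coeff_C_mul]
      rcases eq_or_lt_of_le (show r + 1 ≤ N by omega) with h | h
      · rw [← h]
        have hmonic : (descPochhammer ℝ (r + 1)).coeff (r + 1) = 1 := by
          have h1 := monic_descPochhammer ℝ (r + 1)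
          have h2 := descPochhammer_natDegree ℝ (r + 1)
          rw [Polynomial.Monic, Polynomial.leadingCoeff, h2] at h1
          exact h1
        rw [hmonic, mul_one, hc, sub_self]
      · rw [Polynomial.coeff_eq_zero_of_natDegree_lt (by omega),
          Polynomial.coeff_eq_zero_of_natDegree_lt (by rw [descPochhammer_natDegree]; omega),
          mul_zero, sub_zero]
    have hsplit : ∀ k : ℕ, q.eval (k : ℝ)
        = q'.eval (k : ℝ) + c * ((k.descFactorial (r + 1) : ℝ)) := by
      intro k
      rw [hq', Polynomial.eval_sub, Polynomial.eval_mul, Polynomial.eval_C]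
      rw [descPochhammer_eval_eq_descFactorial ℝ k (r + 1)]
      ring
    have hexp : ∑ k ∈ range (n + 1), (-1 : ℝ) ^ k * (n.choose k : ℝ) * q.eval (k : ℝ)
        = (∑ k ∈ range (n + 1), (-1 : ℝ) ^ k * (n.choose k : ℝ) * q'.eval (k : ℝ))
          + c * ∑ k ∈ range (n + 1),
              (-1 : ℝ) ^ k * (n.choose k : ℝ) * (k.descFactorial (r + 1) : ℝ) := by
      rw [mul_sum, ← sum_add_distrib]
      exact sum_congr rfl fun k _ => by rw [hsplit k]; ring
    rw [hexp, ih q' hdeg (by omega), alt_sum_choose_dF n (r + 1) hn, mul_zero, add_zero]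

/-- Main vanishing lemma: alternating binomial multi-sum of a low-degree polynomial. -/
lemma alt_sum_below {m : ℕ} (μ : Fin m → ℕ) (Q : Polynomial ℝ)
    (hdeg : Q.natDegree < ∑ i, μ i) :
    ∑ δ ∈ below μ, (∏ i, ((μ i).choose (δ i) : ℝ)) * (-1 : ℝ) ^ (∑ i, δ i) *
      Q.eval ((∑ i, δ i : ℕ) : ℝ) = 0 := by
  have hmaps : ∀ δ ∈ below μ, (∑ i, δ i) ∈ range ((∑ i, μ i) + 1) := by
    intro δ hδ
    rw [mem_range, Nat.lt_succ_iff]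
    exact sum_le_sum fun i _ => mem_below.1 hδ i
  rw [← Finset.sum_fiberwise_of_maps_to hmaps]
  have hfiber : ∀ k ∈ range ((∑ i, μ i) + 1),
      ∑ δ ∈ (below μ).filter (fun δ => ∑ i, δ i = k),
        (∏ i, ((μ i).choose (δ i) : ℝ)) * (-1 : ℝ) ^ (∑ i, δ i) * Q.eval ((∑ i, δ i : ℕ) : ℝ)
      = (-1 : ℝ) ^ k * (((∑ i, μ i).choose k : ℝ)) * Q.eval (k : ℝ) := by
    intro k _
    have h1 : ∀ δ ∈ (below μ).filter (fun δ => ∑ i, δ i = k),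
        (∏ i, ((μ i).choose (δ i) : ℝ)) * (-1 : ℝ) ^ (∑ i, δ i) * Q.eval ((∑ i, δ i : ℕ) : ℝ)
        = (∏ i, ((μ i).choose (δ i) : ℝ)) * ((-1 : ℝ) ^ k * Q.eval (k : ℝ)) := by
      intro δ hδ
      rw [(mem_filter.1 hδ).2]
      ring
    rw [Finset.sum_congr rfl h1, ← sum_mul]
    have h2 : ∑ δ ∈ (below μ).filter (fun δ => ∑ i, δ i = k), ∏ i, ((μ i).choose (δ i) : ℝ)
        = (((∑ i, μ i).choose k : ℝ)) := by
      rw [← choose_vandermonde_multi m μ k, sum_filter]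
      push_cast
      refine sum_congr rfl fun δ _ => ?_
      split_ifs <;> simp
    rw [h2]
    ring
  rw [Finset.sum_congr rfl hfiber]
  exact alt_sum_poly ((∑ i, μ i)) Q.natDegree Q le_rfl hdeg

end Aux6

section Aux7
variable {d : ℕ} {ρ : Fin d → ℝ}

/-- Expansion of the pairing of two falling-factorial monomials against the weight. -/
lemma inner_prod (hρ : ∀ i, 0 < ρ i ∧ ρ i < 1) (hρs : ∑ i, ρ i < 1) (N : ℕ)
    (γ β : Fin (d + 1) → ℕ) (hγ : ∑ i, γ i ≤ N) :
    ∑ x ∈ SF (d + 1) N,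
        (∏ i, ((x i).descFactorial (γ i) : ℝ)) * (∏ i, ((x i).descFactorial (β i) : ℝ)) *
          bpow d ρ x / mfact x
      = bpow d ρ γ * ∑ κ ∈ below β,
          (∏ i, (((β i).choose (κ i) : ℝ) * ((γ i).descFactorial (κ i) : ℝ))) *
            (bpow d ρ (β - κ) *
              (if (∑ i, (β - κ) i) ≤ N - ∑ i, γ i
                then (((N - ∑ i, γ i - ∑ i, (β - κ) i).factorial : ℝ))⁻¹ else 0)) := by
  -- step 1: reindex x = y + γ
  rw [sum_SF_shift N γ hγ _ (fun y _ hy => by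
    push_neg at hy
    obtain ⟨i, hi⟩ := hy
    rw [prod_eq_zero (mem_univ i) (by rw [Nat.descFactorial_eq_zero_iff_lt.2 hi, Nat.cast_zero]),
      zero_mul, zero_mul, zero_div])]
  -- step 2: simplify each term
  have hterm : ∀ y : Fin (d + 1) → ℕ,
      (∏ i, (((y + γ) i).descFactorial (γ i) : ℝ)) *
          (∏ i, (((y + γ) i).descFactorial (β i) : ℝ)) * bpow d ρ (y + γ) / mfact (y + γ)
        = bpow d ρ γ *
            ((∏ i, (((y + γ) i).descFactorial (β i) : ℝ)) * bpow d ρ y / mfact y) := by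
    intro y
    have h1 : mfact (y + γ) = (∏ i, (((y + γ) i).descFactorial (γ i) : ℝ)) * mfact y := by
      rw [mfact, mfact, ← prod_mul_distrib]
      exact prod_congr rfl fun i _ => (dF_mul_fact (y i) (γ i)).symm
    have h2 : (∏ i, (((y + γ) i).descFactorial (γ i) : ℝ)) ≠ 0 := by
      refine prod_ne_zero_iff.2 fun i _ => ?_
      intro hc
      have hc' : ((y + γ) i).descFactorial (γ i) = 0 := by exact_mod_cast hc
      have h3 := Nat.descFactorial_eq_zero_iff_lt.1 hc'
      have h4 : γ i ≤ (y + γ) i := by simp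
      omega
    rw [h1, bpow_add]
    set P := ∏ i, (((y + γ) i).descFactorial (γ i) : ℝ)
    set Q := ∏ i, (((y + γ) i).descFactorial (β i) : ℝ)
    rw [show P * Q * (bpow d ρ y * bpow d ρ γ) = P * (Q * (bpow d ρ y * bpow d ρ γ)) from by ring,
      mul_div_mul_left _ _ h2]
    ring
  rw [Finset.sum_congr rfl fun y _ => hterm y, ← mul_sum]
  congr 1
  -- step 3: expand the product of descFactorials via Vandermonde
  have hexp : ∀ y : Fin (d + 1) → ℕ,
      (∏ i, (((y + γ) i).descFactorial (β i) : ℝ))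
        = ∑ κ ∈ below β, ∏ i,
            (((β i).choose (κ i) : ℝ) * (((γ i).descFactorial (κ i) : ℝ) *
              ((y i).descFactorial (β i - κ i) : ℝ))) := by
    intro y
    have h5 : ∀ i : Fin (d + 1), (((y + γ) i).descFactorial (β i) : ℝ)
        = ∑ k ∈ range (β i + 1),
            (((β i).choose k : ℝ) * (((γ i).descFactorial k : ℝ) *
              ((y i).descFactorial (β i - k) : ℝ))) := by
      intro i
      have : (y + γ) i = γ i + y i := by simp [add_comm]
      rw [this, descFactorial_add]
      push_cast
      rfl
    rw [Finset.prod_congr rfl fun i _ => h5 i, prod_univ_sum]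
    rfl
  have hswap : ∑ y ∈ SF (d + 1) (N - ∑ i, γ i),
      (∏ i, (((y + γ) i).descFactorial (β i) : ℝ)) * bpow d ρ y / mfact y
      = ∑ κ ∈ below β, ∑ y ∈ SF (d + 1) (N - ∑ i, γ i),
          (∏ i, (((β i).choose (κ i) : ℝ) * ((γ i).descFactorial (κ i) : ℝ))) *
            ((∏ i, ((y i).descFactorial ((β - κ) i) : ℝ)) * bpow d ρ y / mfact y) := by
    rw [Finset.sum_comm]
    refine sum_congr rfl fun y _ => ?_
    rw [hexp y, sum_mul, sum_div]
    refine sum_congr rfl fun κ _ => ?_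
    have h6 : ∏ i, (((β i).choose (κ i) : ℝ) * (((γ i).descFactorial (κ i) : ℝ) *
          ((y i).descFactorial (β i - κ i) : ℝ)))
        = (∏ i, (((β i).choose (κ i) : ℝ) * ((γ i).descFactorial (κ i) : ℝ))) *
          (∏ i, ((y i).descFactorial ((β - κ) i) : ℝ)) := by
      rw [← prod_mul_distrib]
      exact prod_congr rfl fun i _ => by rw [Pi.sub_apply]; ring
    rw [h6]
    ring
  rw [hswap]
  refine sum_congr rfl fun κ _ => ?_
  rw [← mul_sum]
  congr 1
  exact sum_SF_dF hρ hρs (N - ∑ i, γ i) (β - κ)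

end Aux7

section Aux8
open Polynomial

lemma J_zero {m : ℕ} (N : ℕ) (α κ : Fin m → ℕ) (r : ℕ)
    (hr : ∑ i, κ i + r < ∑ i, α i) (hN : ∑ i, α i ≤ N) :
    ∑ γ ∈ below α,
      (∏ i, (((α i).descFactorial (γ i) : ℝ) * ((γ i).descFactorial (κ i) : ℝ))) *
          (-1 : ℝ) ^ (∑ i, γ i) / (mfact γ * ((N.descFactorial (∑ i, γ i)) : ℝ)) *
        (if r ≤ N - ∑ i, γ i then (((N - ∑ i, γ i - r).factorial : ℝ))⁻¹ else 0) = 0 := by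
  by_cases hκα : ∀ i, κ i ≤ α i
  · -- main case
    set s := ∑ i, κ i with hs
    set A := ∑ i, α i with hA
    set P : Polynomial ℝ := ∏ j ∈ range r, (Polynomial.C ((N : ℝ) - s - j) - Polynomial.X)
      with hPdef
    have hP : P.natDegree = r := by
      rw [hPdef, Polynomial.natDegree_prod]
      · rw [Finset.sum_congr rfl fun j _ => ?_, Finset.sum_const, card_range, smul_eq_mul,
          mul_one]
        rw [show Polynomial.C ((N : ℝ) - s - j) - Polynomial.X
            = -(Polynomial.X - Polynomial.C ((N : ℝ) - s - j)) from by ring,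
          Polynomial.natDegree_neg, Polynomial.natDegree_X_sub_C]
      · intro j _
        rw [show Polynomial.C ((N : ℝ) - s - j) - Polynomial.X
            = -(Polynomial.X - Polynomial.C ((N : ℝ) - s - j)) from by ring, neg_ne_zero]
        exact Polynomial.X_sub_C_ne_zero _
    have hμ : ∑ i, (α - κ) i = A - s := by
      have : ∀ i, (α - κ) i = α i - κ i := fun i => rfl
      rw [Finset.sum_congr rfl fun i _ => this i,
        Finset.sum_tsub_distrib univ (fun i _ => hκα i)]
    have hvan : ∀ γ ∈ below α, ¬(∀ i, κ i ≤ γ i) →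
        (∏ i, (((α i).descFactorial (γ i) : ℝ) * ((γ i).descFactorial (κ i) : ℝ))) *
            (-1 : ℝ) ^ (∑ i, γ i) / (mfact γ * ((N.descFactorial (∑ i, γ i)) : ℝ)) *
          (if r ≤ N - ∑ i, γ i then (((N - ∑ i, γ i - r).factorial : ℝ))⁻¹ else 0) = 0 := by
      intro γ _ hγ
      push_neg at hγ
      obtain ⟨i, hi⟩ := hγ
      rw [prod_eq_zero (mem_univ i)
        (by rw [Nat.descFactorial_eq_zero_iff_lt.2 hi, Nat.cast_zero, mul_zero]),
        zero_mul, zero_div, zero_mul]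
    rw [sum_below_shift α κ hκα _ hvan]
    have hterm : ∀ δ ∈ below (α - κ),
        (∏ i, (((α i).descFactorial ((δ + κ) i) : ℝ) * (((δ + κ) i).descFactorial (κ i) : ℝ))) *
            (-1 : ℝ) ^ (∑ i, (δ + κ) i) /
              (mfact (δ + κ) * ((N.descFactorial (∑ i, (δ + κ) i)) : ℝ)) *
          (if r ≤ N - ∑ i, (δ + κ) i
            then (((N - ∑ i, (δ + κ) i - r).factorial : ℝ))⁻¹ else 0)
        = ((-1 : ℝ) ^ s * (∏ i, (((α i).choose (κ i) : ℝ) * ((κ i).factorial : ℝ))) /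
              (N.factorial : ℝ)) *
            ((∏ i, (((α - κ) i).choose (δ i) : ℝ)) * (-1 : ℝ) ^ (∑ i, δ i) *
              P.eval ((∑ i, δ i : ℕ) : ℝ)) := by
      intro δ hδ
      have hδμ : ∀ i, δ i ≤ α i - κ i := fun i => mem_below.1 hδ i
      set k := ∑ i, δ i with hk
      have hsum : ∑ i, (δ + κ) i = k + s := by
        rw [← Finset.sum_add_distrib]; rfl
      have hks : k + s ≤ A := by
        have : k ≤ A - s := hμ ▸ (sum_le_sum fun i _ => hδμ i)
        have hsA : s ≤ A := sum_le_sum fun i _ => hκα i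
        omega
      have hksN : k + s ≤ N := le_trans hks hN
      set M := N - (k + s) with hM
      -- pointwise numerator
      have hnum : (∏ i, (((α i).descFactorial ((δ + κ) i) : ℝ) *
              (((δ + κ) i).descFactorial (κ i) : ℝ)))
          = (∏ i, (((α i).choose (κ i) : ℝ) * ((κ i).factorial : ℝ) *
              (((α - κ) i).choose (δ i) : ℝ))) * mfact (δ + κ) := by
        rw [mfact, ← prod_mul_distrib]
        refine prod_congr rfl fun i _ => ?_
        have h1 : δ i + κ i ≤ α i := by have := hδμ i; have := hκα i; omega
        have h2 : (α i).descFactorial (δ i + κ i) = (α i).choose (δ i + κ i) *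
            (δ i + κ i).factorial := by
          rw [Nat.descFactorial_eq_factorial_mul_choose]; ring
        have h3 : (δ i + κ i).descFactorial (κ i) = (δ i + κ i).choose (κ i) *
            (κ i).factorial := by
          rw [Nat.descFactorial_eq_factorial_mul_choose]; ring
        have h4 : (α i).choose (δ i + κ i) * (δ i + κ i).choose (κ i)
            = (α i).choose (κ i) * (α i - κ i).choose (δ i) := by
          rw [Nat.choose_mul (show κ i ≤ δ i + κ i by omega), Nat.add_sub_cancel]
        have h5 : ((δ + κ) i) = δ i + κ i := rfl
        have hnat : (α i).descFactorial ((δ + κ) i) * ((δ + κ) i).descFactorial (κ i)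
            = (α i).choose (κ i) * (κ i).factorial * (α i - κ i).choose (δ i) *
              ((δ + κ) i).factorial := by
          rw [h5, h2, h3, ← mul_assoc]
          calc (α i).choose (δ i + κ i) * (δ i + κ i).factorial * ((δ i + κ i).choose (κ i)) *
                (κ i).factorial
              = ((α i).choose (δ i + κ i) * (δ i + κ i).choose (κ i)) *
                (κ i).factorial * (δ i + κ i).factorial := by ring
            _ = _ := by rw [h4]; ring
        calc ((α i).descFactorial ((δ + κ) i) : ℝ) * (((δ + κ) i).descFactorial (κ i) : ℝ)
            = (((α i).descFactorial ((δ + κ) i) * ((δ + κ) i).descFactorial (κ i) : ℕ) : ℝ) := by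
              push_cast; ring
          _ = _ := by rw [hnat]; push_cast [Pi.sub_apply]; ring
      -- descFactorial of N and the if-term
      have hdFN : ((N.descFactorial (k + s)) : ℝ) * ((M.factorial : ℝ)) = (N.factorial : ℝ) := by
        have := dF_mul_fact M (k + s)
        rw [hM] at this ⊢
        rw [show N - (k + s) + (k + s) = N from by omega] at this
        exact this
      have hdFN_ne : ((N.descFactorial (k + s)) : ℝ) ≠ 0 := by
        intro hc
        have hc' : N.descFactorial (k + s) = 0 := by exact_mod_cast hc
        have := Nat.descFactorial_eq_zero_iff_lt.1 hc'
        omega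
      have hif : (if r ≤ M then (((M - r).factorial : ℝ))⁻¹ else 0)
          = ((M.descFactorial r : ℝ)) / (M.factorial : ℝ) := by
        by_cases hrM : r ≤ M
        · rw [if_pos hrM, eq_div_iff (by exact_mod_cast (Nat.factorial_pos M).ne')]
          have := dF_mul_fact (M - r) r
          rw [show M - r + r = M from by omega] at this
          rw [← this]
          have hfne : ((M - r).factorial : ℝ) ≠ 0 := by
            exact_mod_cast (Nat.factorial_pos _).ne'
          field_simp
        · rw [if_neg hrM, Nat.descFactorial_eq_zero_iff_lt.2 (by omega), Nat.cast_zero,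
            zero_div]
      have hPev : ((M.descFactorial r : ℕ) : ℝ) = P.eval ((k : ℕ) : ℝ) := by
        rw [cast_descFactorial, hPdef, Polynomial.eval_prod]
        refine prod_congr rfl fun j _ => ?_
        rw [Polynomial.eval_sub, Polynomial.eval_C, Polynomial.eval_X, hM]
        push_cast [show (k + s) ≤ N from hksN]
        ring
      have hmf := mfact_ne_zero (δ + κ)
      have hNf : (N.factorial : ℝ) ≠ 0 := by exact_mod_cast (Nat.factorial_pos N).ne'
      have hMf : (M.factorial : ℝ) ≠ 0 := by exact_mod_cast (Nat.factorial_pos M).ne'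
      rw [hsum, hnum, hif, ← hPev]
      have hsplit : (∏ i, (((α i).choose (κ i) : ℝ) * ((κ i).factorial : ℝ) *
            (((α - κ) i).choose (δ i) : ℝ)))
          = (∏ i, (((α i).choose (κ i) : ℝ) * ((κ i).factorial : ℝ))) *
            (∏ i, (((α - κ) i).choose (δ i) : ℝ)) := by
        rw [← prod_mul_distrib]
      have hpow : (-1 : ℝ) ^ (k + s) = (-1 : ℝ) ^ k * (-1 : ℝ) ^ s := pow_add _ _ _
      rw [hsplit, hpow]
      have h1N : ((N.descFactorial (k + s)) : ℝ) = (N.factorial : ℝ) / (M.factorial : ℝ) := by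
        rw [eq_div_iff hMf]; exact hdFN
      rw [h1N]
      field_simp
    rw [Finset.sum_congr rfl hterm, ← mul_sum]
    have halt := alt_sum_below (α - κ) P (by rw [hP, hμ]; omega)
    rw [halt, mul_zero]
  · push_neg at hκα
    obtain ⟨i, hi⟩ := hκα
    refine sum_eq_zero fun γ hγ => ?_
    have : γ i < κ i := lt_of_le_of_lt (mem_below.1 hγ i) hi
    rw [prod_eq_zero (mem_univ i)
      (by rw [Nat.descFactorial_eq_zero_iff_lt.2 this, Nat.cast_zero, mul_zero]),
      zero_mul, zero_div, zero_mul]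

end Aux8

section Aux9
variable {d : ℕ} {ρ : Fin d → ℝ}

lemma div_neg_one_pow (x : ℝ) (g : ℕ) : x / (-1 : ℝ) ^ g = x * (-1) ^ g := by
  rw [div_eq_mul_inv, ← inv_pow, inv_neg, inv_one]

lemma orth (d N : ℕ) (ρ : Fin d → ℝ) (hρ : ∀ i, 0 < ρ i ∧ ρ i < 1) (hρs : ∑ i, ρ i < 1)
    (α β : Fin (d + 1) → ℕ) (hβα : ∑ i, β i < ∑ i, α i) (hN : ∑ i, α i ≤ N) :
    ∑ x ∈ ZN d N,
      monicL d N ρ α (fun i => (x i : ℝ)) * mono β (fun i => (x i : ℝ)) *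
        bpow d ρ x / mfact x = 0 := by
  have hZN : (ZN d N) = SF (d + 1) N := rfl
  set CA := poch (-(N : ℝ)) (∑ i, α i) * bpow d ρ α with hCA
  -- step 1: termwise expansion of monicL
  have hx : ∀ x : Fin (d + 1) → ℕ,
      monicL d N ρ α (fun i => (x i : ℝ)) * mono β (fun i => (x i : ℝ)) *
          bpow d ρ x / mfact x
        = ∑ γ ∈ below α,
            (CA * (pochV (fun i => -(α i : ℝ)) γ * (-1 : ℝ) ^ (∑ i, γ i) /
              (mfact γ * poch (-(N : ℝ)) (∑ i, γ i) * bpow d ρ γ))) *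
            ((∏ i, ((x i).descFactorial (γ i) : ℝ)) *
              (∏ i, ((x i).descFactorial (β i) : ℝ)) * bpow d ρ x / mfact x) := by
    intro x
    rw [monicL, ← hCA, mul_sum, sum_mul, sum_mul, sum_div]
    refine sum_congr rfl fun γ _ => ?_
    rw [mono_nat γ x, mono_nat β x]
    ring
  rw [hZN, Finset.sum_congr rfl fun x _ => hx x, Finset.sum_comm]
  -- step 2: apply inner_prod for each γ
  have hγsum : ∀ γ ∈ below α, ∑ i, γ i ≤ N := by
    intro γ hγ
    exact le_trans (sum_le_sum fun i _ => mem_below.1 hγ i) hN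
  have step2 : ∀ γ ∈ below α,
      ∑ x ∈ SF (d + 1) N,
        (CA * (pochV (fun i => -(α i : ℝ)) γ * (-1 : ℝ) ^ (∑ i, γ i) /
            (mfact γ * poch (-(N : ℝ)) (∑ i, γ i) * bpow d ρ γ))) *
          ((∏ i, ((x i).descFactorial (γ i) : ℝ)) *
            (∏ i, ((x i).descFactorial (β i) : ℝ)) * bpow d ρ x / mfact x)
      = ∑ κ ∈ below β,
          (CA * (pochV (fun i => -(α i : ℝ)) γ * (-1 : ℝ) ^ (∑ i, γ i) /
            (mfact γ * poch (-(N : ℝ)) (∑ i, γ i) * bpow d ρ γ))) * bpow d ρ γ *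
          ((∏ i, (((β i).choose (κ i) : ℝ) * ((γ i).descFactorial (κ i) : ℝ))) *
            (bpow d ρ (β - κ) *
              (if (∑ i, (β - κ) i) ≤ N - ∑ i, γ i
                then (((N - ∑ i, γ i - ∑ i, (β - κ) i).factorial : ℝ))⁻¹ else 0))) := by
    intro γ hγ
    rw [← mul_sum, inner_prod hρ hρs N γ β (hγsum γ hγ), ← mul_assoc, mul_sum]
  rw [Finset.sum_congr rfl step2, Finset.sum_comm]
  -- step 3: for each κ, the γ-sum vanishes
  refine sum_eq_zero fun κ hκ => ?_
  have hκβ : ∀ i, κ i ≤ β i := mem_below.1 hκ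
  set r := ∑ i, (β - κ) i with hr
  have hrκ : ∑ i, κ i + r = ∑ i, β i := by
    rw [hr]
    have h1 : ∀ i, (β - κ) i = β i - κ i := fun i => rfl
    rw [Finset.sum_congr rfl fun i _ => h1 i, Finset.sum_tsub_distrib univ fun i _ => hκβ i]
    have := sum_le_sum (s := univ) fun i (_ : i ∈ univ) => hκβ i
    omega
  -- termwise identification with J_zero summand
  have hterm : ∀ γ ∈ below α,
      (CA * (pochV (fun i => -(α i : ℝ)) γ * (-1 : ℝ) ^ (∑ i, γ i) /
          (mfact γ * poch (-(N : ℝ)) (∑ i, γ i) * bpow d ρ γ))) * bpow d ρ γ *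
        ((∏ i, (((β i).choose (κ i) : ℝ) * ((γ i).descFactorial (κ i) : ℝ))) *
          (bpow d ρ (β - κ) *
            (if r ≤ N - ∑ i, γ i
              then (((N - ∑ i, γ i - r).factorial : ℝ))⁻¹ else 0)))
      = (CA * (∏ i, ((β i).choose (κ i) : ℝ)) * bpow d ρ (β - κ)) *
          ((∏ i, (((α i).descFactorial (γ i) : ℝ) * ((γ i).descFactorial (κ i) : ℝ))) *
            (-1 : ℝ) ^ (∑ i, γ i) / (mfact γ * ((N.descFactorial (∑ i, γ i)) : ℝ)) *
            (if r ≤ N - ∑ i, γ i then (((N - ∑ i, γ i - r).factorial : ℝ))⁻¹ else 0)) := by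
    intro γ hγ
    set g := ∑ i, γ i with hg
    have hnum : pochV (fun i => -(α i : ℝ)) γ * (-1 : ℝ) ^ g
        = ∏ i, ((α i).descFactorial (γ i) : ℝ) := by
      rw [pochV_neg_nat α γ, mul_comm ((-1 : ℝ) ^ (∑ i, γ i)), mul_assoc, ← pow_add,
        Even.neg_one_pow ⟨∑ i, γ i, by ring⟩, mul_one]
    have hpoch : poch (-(N : ℝ)) g = (-1 : ℝ) ^ g * ((N.descFactorial g) : ℝ) :=
      poch_neg_nat N g
    have hsplit1 : (∏ i, (((β i).choose (κ i) : ℝ) * ((γ i).descFactorial (κ i) : ℝ)))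
        = (∏ i, ((β i).choose (κ i) : ℝ)) * (∏ i, ((γ i).descFactorial (κ i) : ℝ)) :=
      prod_mul_distrib
    have hsplit2 : (∏ i, (((α i).descFactorial (γ i) : ℝ) * ((γ i).descFactorial (κ i) : ℝ)))
        = (∏ i, ((α i).descFactorial (γ i) : ℝ)) * (∏ i, ((γ i).descFactorial (κ i) : ℝ)) :=
      prod_mul_distrib
    have hb : bpow d ρ γ ≠ 0 := (bpow_pos hρ hρs γ).ne'
    have hm : mfact γ ≠ 0 := mfact_ne_zero γ
    have hD : ((N.descFactorial g) : ℝ) ≠ 0 := by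
      intro hc
      have hc' : N.descFactorial g = 0 := by exact_mod_cast hc
      have := Nat.descFactorial_eq_zero_iff_lt.1 hc'
      have := hγsum γ hγ
      omega
    rw [hnum, hpoch, hsplit1, hsplit2]
    have hden : mfact γ * ((-1 : ℝ) ^ g * ((N.descFactorial g) : ℝ)) * bpow d ρ γ
        = (-1 : ℝ) ^ g * (mfact γ * ((N.descFactorial g) : ℝ) * bpow d ρ γ) := by ring
    rw [hden, div_mul_eq_div_div_swap, div_neg_one_pow]
    set iv := (if r ≤ N - g then (((N - g - r).factorial : ℝ))⁻¹ else 0)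
    field_simp
  rw [Finset.sum_congr rfl hterm, ← mul_sum, J_zero N α κ r (by omega) hN, mul_zero]

end Aux9

/-- the monic Krawtchouk polynomial is orthogonal to lower degrees and
is monic. -/
theorem monicKrawtchouk_orthogonal_and_monic (d N : ℕ) (hd : 1 ≤ d) (ρ : Fin d → ℝ)
    (hρ : ∀ i, 0 < ρ i ∧ ρ i < 1) (hρs : ∑ i, ρ i < 1)
    (α : Fin (d + 1) → ℕ) (h1 : 1 ≤ ∑ i, α i) (hN : ∑ i, α i ≤ N) :
    (∀ β : Fin (d + 1) → ℕ, ∑ i, β i < ∑ i, α i →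
        ∑ x ∈ ZN d N,
          monicL d N ρ α (fun i => (x i : ℝ)) * mono β (fun i => (x i : ℝ)) *
            bpow d ρ x / mfact x = 0) ∧
      poch (-(N : ℝ)) (∑ i, α i) * bpow d ρ α *
          (pochV (fun i => -(α i : ℝ)) α * (-1 : ℝ) ^ (∑ i, α i) /
            (mfact α * poch (-(N : ℝ)) (∑ i, α i) * bpow d ρ α)) = 1 := by
  constructor
  · intro β hβ
    exact orth d N ρ hρ hρs α β hβ hN
  · have hA : pochV (fun i => -(α i : ℝ)) α * (-1 : ℝ) ^ (∑ i, α i) = mfact α := by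
      rw [pochV_neg_nat α α, mul_comm ((-1 : ℝ) ^ (∑ i, α i)), mul_assoc, ← pow_add,
        Even.neg_one_pow ⟨∑ i, α i, by ring⟩, mul_one, mfact]
      exact prod_congr rfl fun i _ => by rw [Nat.descFactorial_self]
    have hpN : poch (-(N : ℝ)) (∑ i, α i) ≠ 0 := by
      rw [poch_neg_nat]
      refine mul_ne_zero (pow_ne_zero _ (by norm_num)) ?_
      intro hc
      have hc' : N.descFactorial (∑ i, α i) = 0 := by exact_mod_cast hc
      have := Nat.descFactorial_eq_zero_iff_lt.1 hc'
      omega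
    have hb : bpow d ρ α ≠ 0 := (bpow_pos hρ hρs α).ne'
    have hm : mfact α ≠ 0 := mfact_ne_zero α
    rw [hA]
    field_simp
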